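/- The function α(t) = (sinh(2t) - 2t) / (8 sinh²(t)), extended by α(0) = 0, is a strictly monotone real-analytic bijection from ℝ onto the open interval (-1/4, 1/4). -/

import Mathlib

/-- α(t) = (sinh(2t) - 2t)/(8 sinh²(t)), extended by α(0) = 0. -/
noncomputable def alphaFun (t : ℝ) : ℝ :=
  if t = 0 then 0 else (Real.sinh (2 * t) - 2 * t) / (8 * Real.sinh t ^ 2)

open Real Filter Set Topology

lemma alphaFun_eq {t : ℝ} (ht : t ≠ 0) :
    alphaFun t = (Real.sinh (2 * t) - 2 * t) / (8 * Real.sinh t ^ 2) := by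
  simp [alphaFun, ht]

lemma alphaFun_zero : alphaFun 0 = 0 := by simp [alphaFun]

lemma alphaFun_neg (t : ℝ) : alphaFun (-t) = -alphaFun t := by
  rcases eq_or_ne t 0 with rfl | ht
  · simp [alphaFun]
  · rw [alphaFun_eq (neg_ne_zero.2 ht), alphaFun_eq ht,
      show 2 * (-t) = -(2*t) by ring, Real.sinh_neg, Real.sinh_neg]
    ring

lemma sinh_lt_mul_cosh {t : ℝ} (ht : 0 < t) : Real.sinh t < t * Real.cosh t := by
  have h : StrictMonoOn (fun s => s * Real.cosh s - Real.sinh s) (Set.Ici 0) := by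
    apply strictMonoOn_of_deriv_pos (convex_Ici 0)
    · exact ((continuous_id.mul Real.continuous_cosh).sub Real.continuous_sinh).continuousOn
    · intro x hx
      rw [interior_Ici, mem_Ioi] at hx
      have hd : HasDerivAt (fun s => s * Real.cosh s - Real.sinh s) (x * Real.sinh x) x := by
        have := ((hasDerivAt_id x).mul (Real.hasDerivAt_cosh x)).sub (Real.hasDerivAt_sinh x)
        refine this.congr_deriv ?_
        simp only [id, one_mul]; ring
      rw [hd.deriv]
      exact mul_pos hx (Real.sinh_pos_iff.2 hx)
  have h2 := h (le_refl (0:ℝ)) (le_of_lt ht) ht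
  simp at h2
  linarith

lemma cosh_two_mul' (t : ℝ) : Real.cosh (2*t) = 2 * Real.sinh t ^ 2 + 1 := by
  rw [Real.cosh_two_mul, Real.cosh_sq]; ring

lemma alpha_hasDeriv {t : ℝ} (ht : t ≠ 0) :
    HasDerivAt (fun s => (Real.sinh (2*s) - 2*s)/(8*Real.sinh s^2))
      ((t * Real.cosh t - Real.sinh t)/(2 * Real.sinh t ^ 3)) t := by
  have hs : Real.sinh t ≠ 0 := Real.sinh_ne_zero.2 ht
  have h1 : HasDerivAt (fun s : ℝ => 2*s) 2 t := by
    simpa using (hasDerivAt_id t).const_mul 2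
  have hu : HasDerivAt (fun s : ℝ => Real.sinh (2*s) - 2*s) (Real.cosh (2*t) * 2 - 2) t :=
    h1.sinh.sub h1
  have hv : HasDerivAt (fun s : ℝ => 8 * Real.sinh s ^ 2)
      (8 * (2 * Real.sinh t ^ 1 * Real.cosh t)) t :=
    ((Real.hasDerivAt_sinh t).pow 2).const_mul 8
  have hv' : (8:ℝ) * Real.sinh t ^ 2 ≠ 0 := by
    exact mul_ne_zero (by norm_num) (pow_ne_zero 2 hs)
  have hdiv := hu.div hv hv'
  refine hdiv.congr_deriv ?_
  rw [cosh_two_mul', Real.sinh_two_mul]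
  field_simp
  linear_combination (-8 * Real.sinh t) * Real.cosh_sq t

lemma alpha_pos {t : ℝ} (ht : 0 < t) : 0 < alphaFun t := by
  rw [alphaFun_eq ht.ne']
  apply div_pos
  · have := Real.self_lt_sinh_iff.2 (by linarith : 0 < 2*t)
    linarith
  · have hs : Real.sinh t ≠ 0 := Real.sinh_ne_zero.2 ht.ne'
    positivity

lemma alpha_le_half {t : ℝ} (ht : 0 < t) : alphaFun t ≤ t / 2 := by
  rw [alphaFun_eq ht.ne']
  have hs : Real.sinh t ≠ 0 := Real.sinh_ne_zero.2 ht.ne'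
  have hden : (0:ℝ) < 8 * Real.sinh t ^ 2 := by positivity
  rw [div_le_iff₀ hden]
  have hkey := (sinh_lt_mul_cosh (by linarith : 0 < 2*t)).le
  have hc2 := cosh_two_mul' t
  nlinarith [hkey, hc2]

lemma abs_alpha_le (t : ℝ) : |alphaFun t| ≤ |t| / 2 := by
  rcases lt_trichotomy t 0 with h | rfl | h
  · have h1 := alpha_pos (by linarith : 0 < -t)
    have h2 := alpha_le_half (by linarith : 0 < -t)
    rw [alphaFun_neg] at h1 h2
    rw [abs_of_neg (show alphaFun t < 0 by linarith), abs_of_neg h]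
    linarith
  · simp [alphaFun_zero]
  · have h1 := alpha_pos h
    have h2 := alpha_le_half h
    rw [abs_of_pos h1, abs_of_pos h]
    linarith

lemma alpha_lt_quarter (t : ℝ) : alphaFun t < 1/4 := by
  rcases eq_or_ne t 0 with rfl | ht
  · rw [alphaFun_zero]; norm_num
  · rw [alphaFun_eq ht]
    have hs : Real.sinh t ≠ 0 := Real.sinh_ne_zero.2 ht
    have hden : (0:ℝ) < 8 * Real.sinh t ^ 2 := by positivity
    rw [div_lt_iff₀ hden]
    have hexp : -(2*t) + 1 < Real.exp (-(2*t)) :=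
      Real.add_one_lt_exp (by simpa using (mul_ne_zero (two_ne_zero) ht))
    have hcs : Real.cosh (2*t) - Real.sinh (2*t) = Real.exp (-(2*t)) := Real.cosh_sub_sinh _
    have hc2 := cosh_two_mul' t
    nlinarith

lemma quarter_lt_alpha (t : ℝ) : -(1/4) < alphaFun t := by
  have := alpha_lt_quarter (-t)
  rw [alphaFun_neg] at this
  linarith

noncomputable def Fc : ℂ → ℂ := fun z => (Complex.sinh (2*z) - 2*z)/(8 * Complex.sinh z ^ 2)

noncomputable def Gc : ℂ → ℂ := Function.update Fc 0 0

lemma Fc_zero : Fc 0 = 0 := by simp [Fc]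

lemma Fc_real {t : ℝ} (ht : t ≠ 0) : Fc ↑t = ↑(alphaFun t) := by
  rw [alphaFun_eq ht, Fc]
  push_cast
  ring

lemma tendsto_sinh_div : Tendsto (fun z : ℂ => Complex.sinh z / z) (𝓝[≠] 0) (𝓝 1) := by
  have h := hasDerivAt_iff_tendsto_slope.mp (Complex.hasDerivAt_sinh 0)
  rw [Complex.cosh_zero] at h
  refine h.congr fun z => ?_
  rw [slope_def_field]
  simp

lemma eventually_sinh_ne : ∀ᶠ z in 𝓝[≠] (0:ℂ), Complex.sinh z ≠ 0 := by
  filter_upwards [tendsto_sinh_div.eventually_ne one_ne_zero] with z h1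
  intro h
  rw [h] at h1
  simp at h1

lemma Fc_differentiableAt {z : ℂ} (hz : Complex.sinh z ≠ 0) : DifferentiableAt ℂ Fc z := by
  have h1 : DifferentiableAt ℂ (fun z : ℂ => Complex.sinh (2*z) - 2*z) z :=
    ((Complex.differentiable_sinh.comp (differentiable_id.const_mul 2)).sub
      (differentiable_id.const_mul 2)).differentiableAt
  have h2 : DifferentiableAt ℂ (fun z : ℂ => 8 * Complex.sinh z ^ 2) z :=
    ((Complex.differentiable_sinh.pow 2).const_mul 8).differentiableAt
  exact h1.div h2 (mul_ne_zero (by norm_num) (pow_ne_zero 2 hz))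

lemma tendsto_L1 : Tendsto (fun z : ℂ => (Complex.sinh (2*z) - 2*z)/z) (𝓝[≠] 0) (𝓝 0) := by
  have h1 : HasDerivAt (fun z : ℂ => 2*z) 2 (0:ℂ) := by
    simpa using (hasDerivAt_id (0:ℂ)).const_mul 2
  have hu : HasDerivAt (fun z : ℂ => Complex.sinh (2*z) - 2*z) (Complex.cosh (2*0) * 2 - 2) 0 :=
    h1.csinh.sub h1
  have hu0 : Complex.cosh (2*0) * 2 - 2 = 0 := by simp
  rw [hu0] at hu
  have h := hasDerivAt_iff_tendsto_slope.mp hu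
  refine h.congr fun z => ?_
  rw [slope_def_field]
  simp

lemma tendsto_L2 : Tendsto (fun z : ℂ => z^2/(8 * Complex.sinh z ^ 2)) (𝓝[≠] 0) (𝓝 (1/8)) := by
  have h := ((tendsto_sinh_div.inv₀ one_ne_zero).pow 2).div_const 8
  have hval : ((1:ℂ)⁻¹)^2 / 8 = 1/8 := by norm_num
  rw [hval] at h
  refine h.congr' ?_
  filter_upwards [eventually_sinh_ne, self_mem_nhdsWithin] with z hs hz
  have hz' : z ≠ 0 := hz
  field_simp

lemma tendsto_mul_Fc : Tendsto (fun z : ℂ => Fc z * z) (𝓝[≠] 0) (𝓝 0) := by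
  have h := tendsto_L1.mul tendsto_L2
  rw [zero_mul] at h
  refine h.congr' ?_
  filter_upwards [eventually_sinh_ne, self_mem_nhdsWithin] with z hs hz
  have hz' : z ≠ 0 := hz
  rw [Fc]
  field_simp

lemma Fc_isLittleO :
    (fun z : ℂ => Fc z - Fc 0) =o[𝓝[≠] (0:ℂ)] fun z => (z - 0)⁻¹ := by
  rw [Asymptotics.isLittleO_iff_tendsto']
  · refine tendsto_mul_Fc.congr' ?_
    filter_upwards [self_mem_nhdsWithin] with z hz
    rw [Fc_zero]
    field_simp
    ring
  · filter_upwards [self_mem_nhdsWithin] with z hz h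
    simp at h
    exact absurd h hz

lemma tendsto_alpha_zero : Tendsto alphaFun (𝓝 0) (𝓝 0) := by
  apply squeeze_zero_norm abs_alpha_le
  have : Tendsto (fun t : ℝ => |t| / 2) (𝓝 0) (𝓝 (|(0:ℝ)| / 2)) :=
    (continuous_abs.div_const 2).continuousAt
  simpa using this

lemma tendsto_Fc_punctured : Tendsto Fc (𝓝[≠] (0:ℂ)) (𝓝 0) := by
  have hd : ∀ᶠ z in 𝓝[≠] (0:ℂ), DifferentiableAt ℂ Fc z := by
    filter_upwards [eventually_sinh_ne] with z hz using Fc_differentiableAt hz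
  have hlim := Complex.tendsto_limUnder_of_differentiable_on_punctured_nhds_of_isLittleO hd
    Fc_isLittleO
  -- identify the limit with 0 via real values
  have hmap : Tendsto (fun t : ℝ => (↑t : ℂ)) (𝓝[≠] (0:ℝ)) (𝓝[≠] (0:ℂ)) := by
    apply Tendsto.inf
    · simpa using (Complex.continuous_ofReal.tendsto 0)
    · exact tendsto_principal_principal.2 fun x hx => by
        simpa using hx
  have h1 : Tendsto (fun t : ℝ => Fc ↑t) (𝓝[≠] (0:ℝ)) (𝓝 (limUnder (𝓝[≠] (0:ℂ)) Fc)) :=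
    hlim.comp hmap
  have h2 : Tendsto (fun t : ℝ => Fc ↑t) (𝓝[≠] (0:ℝ)) (𝓝 0) := by
    have h3 : Tendsto (fun t : ℝ => (↑(alphaFun t) : ℂ)) (𝓝[≠] (0:ℝ)) (𝓝 0) := by
      have h4 : Tendsto alphaFun (𝓝[≠] (0:ℝ)) (𝓝 0) :=
        tendsto_alpha_zero.mono_left nhdsWithin_le_nhds
      have := (Complex.continuous_ofReal.tendsto 0).comp h4
      exact this
    refine h3.congr' ?_
    filter_upwards [self_mem_nhdsWithin] with t ht
    exact (Fc_real ht).symm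
  have := tendsto_nhds_unique h1 h2
  rwa [this] at hlim

lemma Gc_analyticAt_zero : AnalyticAt ℂ Gc 0 := by
  apply Complex.analyticAt_of_differentiable_on_punctured_nhds_of_continuousAt
  · filter_upwards [eventually_sinh_ne, self_mem_nhdsWithin] with z hz hz0
    have hz0' : z ≠ 0 := hz0
    have heq : Gc =ᶠ[𝓝 z] Fc := by
      filter_upwards [eventually_ne_nhds hz0'] with w hw
      simp [Gc, Function.update_of_ne hw]
    exact heq.differentiableAt_iff.2 (Fc_differentiableAt hz)
  · rw [Gc, continuousAt_update_same]
    exact tendsto_Fc_punctured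

lemma Gc_analyticAt_real (t : ℝ) : AnalyticAt ℂ Gc ↑t := by
  rcases eq_or_ne t 0 with rfl | ht
  · simpa using Gc_analyticAt_zero
  · have hs : Complex.sinh ↑t ≠ 0 := by
      rw [← Complex.ofReal_sinh]
      exact Complex.ofReal_ne_zero.2 (Real.sinh_ne_zero.2 ht)
    have hopen : IsOpen {z : ℂ | Complex.sinh z ≠ 0} :=
      isOpen_compl_singleton.preimage Complex.continuous_sinh
    have hFc : AnalyticAt ℂ Fc ↑t := by
      apply DifferentiableOn.analyticAt (s := {z : ℂ | Complex.sinh z ≠ 0})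
      · exact fun z hz => (Fc_differentiableAt hz).differentiableWithinAt
      · exact hopen.mem_nhds hs
    refine hFc.congr ?_
    have ht' : (↑t : ℂ) ≠ 0 := by simpa using ht
    filter_upwards [eventually_ne_nhds ht'] with w hw
    simp [Gc, Function.update_of_ne hw]

lemma alpha_eq_re (t : ℝ) : alphaFun t = (Gc ↑t).re := by
  rcases eq_or_ne t 0 with rfl | ht
  · simp [Gc, alphaFun_zero]
  · have ht' : (↑t : ℂ) ≠ 0 := by simpa using ht
    rw [Gc, Function.update_of_ne ht', Fc_real ht]
    simp

lemma alpha_analytic : AnalyticOnNhd ℝ alphaFun Set.univ := by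
  intro x _
  have hG : AnalyticAt ℝ Gc ↑x := (Gc_analyticAt_real x).restrictScalars
  have h1 : AnalyticAt ℝ (fun t : ℝ => Complex.reCLM (Gc (Complex.ofRealCLM t))) x :=
    (Complex.reCLM.analyticAt _).comp (hG.comp (Complex.ofRealCLM.analyticAt x))
  exact h1.congr (Filter.Eventually.of_forall fun t => (alpha_eq_re t).symm)

lemma alpha_continuous : Continuous alphaFun :=
  continuous_iff_continuousAt.2 fun x => (alpha_analytic x (Set.mem_univ x)).continuousAt

lemma alpha_strictMonoOn : StrictMonoOn alphaFun (Set.Ici 0) := by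
  apply strictMonoOn_of_deriv_pos (convex_Ici 0) alpha_continuous.continuousOn
  intro x hx
  rw [interior_Ici, mem_Ioi] at hx
  have hx0 : x ≠ 0 := ne_of_gt hx
  have heq : alphaFun =ᶠ[𝓝 x] fun s => (Real.sinh (2*s) - 2*s)/(8*Real.sinh s^2) := by
    filter_upwards [eventually_ne_nhds hx0] with s hs
    exact alphaFun_eq hs
  rw [heq.deriv_eq, (alpha_hasDeriv hx0).deriv]
  apply div_pos
  · linarith [sinh_lt_mul_cosh hx]
  · have : 0 < Real.sinh x := Real.sinh_pos_iff.2 hx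
    positivity

lemma alpha_strictMono : StrictMono alphaFun := by
  intro a b hab
  rcases le_or_gt 0 a with ha | ha
  · exact alpha_strictMonoOn ha (le_trans ha hab.le) hab
  · rcases le_or_gt b 0 with hb | hb
    · have h := alpha_strictMonoOn (by linarith : (0:ℝ) ≤ -b) (by linarith : (0:ℝ) ≤ -a)
        (by linarith : -b < -a)
      rw [alphaFun_neg, alphaFun_neg] at h
      linarith
    · have h1 : alphaFun a < 0 := by
        have := alpha_pos (by linarith : 0 < -a)
        rw [alphaFun_neg] at this
        linarith
      exact lt_trans h1 (alpha_pos hb)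

lemma alpha_eventually_eq : ∀ᶠ t in atTop, alphaFun t =
    ((1 - Real.exp (-(4*t)))/2 - 2*t*Real.exp (-(2*t))) / (2*(1 - Real.exp (-(2*t)))^2) := by
  filter_upwards [eventually_gt_atTop (0:ℝ)] with t ht
  have h2 : Real.exp (-(2*t)) = Real.exp (-t) ^ 2 := by
    rw [show -(2*t) = ((2:ℕ):ℝ) * (-t) by push_cast; ring, Real.exp_nat_mul]
  have h4 : Real.exp (-(4*t)) = Real.exp (-t) ^ 4 := by
    rw [show -(4*t) = ((4:ℕ):ℝ) * (-t) by push_cast; ring, Real.exp_nat_mul]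
  have h1e : 1 < Real.exp t := Real.one_lt_exp_iff.2 ht
  have hlt : Real.exp (-t) < 1 := Real.exp_lt_one_iff.2 (by linarith)
  have hpos : 0 < Real.exp (-t) := Real.exp_pos _
  have ha : Real.exp t ≠ 0 := Real.exp_ne_zero t
  have hinv : Real.exp (-t) = (Real.exp t)⁻¹ := Real.exp_neg t
  have h5 : Real.exp t - (Real.exp t)⁻¹ ≠ 0 := by
    rw [← hinv]; intro h; nlinarith
  have h6 : 1 - ((Real.exp t)⁻¹)^2 ≠ 0 := by
    rw [← hinv]; intro h; nlinarith
  rw [alphaFun_eq ht.ne', Real.sinh_eq, Real.sinh_eq, h4, h2, hinv]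
  rw [show 2*t = ((2:ℕ):ℝ) * t by push_cast; ring, Real.exp_nat_mul]
  push_cast
  rw [div_eq_div_iff
    (mul_ne_zero (by norm_num) (pow_ne_zero 2 (div_ne_zero h5 two_ne_zero)))
    (mul_ne_zero two_ne_zero (pow_ne_zero 2 h6))]
  field_simp
  ring

lemma tendsto_alpha_atTop : Tendsto alphaFun atTop (𝓝 (1/4)) := by
  have hmul : Tendsto (fun t : ℝ => 2*t) atTop atTop := by
    apply Tendsto.const_mul_atTop (by norm_num : (0:ℝ) < 2) tendsto_id
  have hmul4 : Tendsto (fun t : ℝ => 4*t) atTop atTop := by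
    apply Tendsto.const_mul_atTop (by norm_num : (0:ℝ) < 4) tendsto_id
  have l1 : Tendsto (fun t : ℝ => Real.exp (-(4*t))) atTop (𝓝 0) :=
    Real.tendsto_exp_atBot.comp (tendsto_neg_atTop_atBot.comp hmul4)
  have l3 : Tendsto (fun t : ℝ => Real.exp (-(2*t))) atTop (𝓝 0) :=
    Real.tendsto_exp_atBot.comp (tendsto_neg_atTop_atBot.comp hmul)
  have l2 : Tendsto (fun t : ℝ => 2*t*Real.exp (-(2*t))) atTop (𝓝 0) := by
    have base := tendsto_pow_mul_exp_neg_atTop_nhds_zero 1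
    have := base.comp hmul
    simpa [Function.comp_def] using this
  have hbig : Tendsto (fun t : ℝ =>
      ((1 - Real.exp (-(4*t)))/2 - 2*t*Real.exp (-(2*t))) / (2*(1 - Real.exp (-(2*t)))^2))
      atTop (𝓝 (((1 - 0)/2 - 0) / (2*(1 - 0)^2))) := by
    exact (((tendsto_const_nhds.sub l1).div_const 2).sub l2).div
      (((tendsto_const_nhds.sub l3).pow 2).const_mul 2) (by norm_num)
  have : (((1:ℝ) - 0)/2 - 0) / (2*(1 - 0)^2) = 1/4 := by norm_num
  rw [this] at hbig
  refine hbig.congr' ?_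
  filter_upwards [alpha_eventually_eq] with t h
  exact h.symm

lemma tendsto_alpha_atBot : Tendsto alphaFun atBot (𝓝 (-(1/4))) := by
  have h := (tendsto_alpha_atTop.comp tendsto_neg_atBot_atTop).neg
  rw [show -((1:ℝ)/4) = -(1/4) from rfl] at h
  refine h.congr fun t => ?_
  simp [Function.comp, alphaFun_neg]

lemma alpha_range : Set.range alphaFun = Set.Ioo (-(1 / 4) : ℝ) (1 / 4) := by
  ext y
  constructor
  · rintro ⟨t, rfl⟩
    exact ⟨quarter_lt_alpha t, alpha_lt_quarter t⟩
  · rintro ⟨hy1, hy2⟩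
    have hb : ∀ᶠ t in atTop, y < alphaFun t :=
      tendsto_alpha_atTop.eventually_const_lt hy2
    have ha : ∀ᶠ t in atBot, alphaFun t < y :=
      tendsto_alpha_atBot.eventually_lt_const hy1
    obtain ⟨b, hb⟩ := hb.exists
    obtain ⟨a, ha⟩ := ha.exists
    have := intermediate_value_univ a b alpha_continuous
    exact this ⟨ha.le, hb.le⟩

theorem alphaFun_strictMono_analytic_bijective :
    StrictMono alphaFun ∧ AnalyticOnNhd ℝ alphaFun Set.univ ∧
    Set.range alphaFun = Set.Ioo (-(1 / 4) : ℝ) (1 / 4) :=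
  ⟨alpha_strictMono, alpha_analytic, alpha_range⟩
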